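/- arXiv:math/0301014 — 2 statements merged into one kernel-verified Lean document; each statement's English description precedes it below -/
import Mathlib

section
/- The level set {r ∈ (ℝ^+)^{n+1} : μ_1(r) = k_1 and μ_2(r) = k_2} is nonempty if and only if (-k_1/π)·e^{(4π/(n+1))k_2} ≥ n+1. -/
open Real BigOperators

/-- The level set { r ∈ (ℝ⁺)^{n+1} : μ₁(r) = k₁, μ₂(r) = k₂ } is nonempty iff
(-k₁/π)·e^{(4π/(n+1)) k₂} ≥ n+1, where μ₁(r) = -π Σ r_i² and
μ₂(r) = -(1/(2π)) log(∏ r_i). -/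
theorem stmt6 (n : ℕ) (hn : 1 ≤ n) (k₁ k₂ : ℝ) (hk₁ : k₁ < 0) :
    (∃ r : Fin (n + 1) → ℝ, (∀ i, 0 < r i) ∧
        -π * ∑ i, (r i) ^ 2 = k₁ ∧
        -(1 / (2 * π)) * Real.log (∏ i, r i) = k₂) ↔
      (-k₁ / π) * Real.exp ((4 * π / (n + 1)) * k₂) ≥ n + 1 := by
  have hπ : (0:ℝ) < π := Real.pi_pos
  have hn1 : (0:ℝ) < (n:ℝ) + 1 := by positivity
  constructor
  · rintro ⟨r, hr, h1, h2⟩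
    set P : ℝ := ∏ i, r i with hP
    have hPpos : 0 < P := Finset.prod_pos (fun i _ => hr i)
    have hS : -k₁ / π = ∑ i, (r i)^2 := by
      field_simp [← h1]
      linarith [h1]
    have hexp : Real.exp ((4 * π / (n + 1)) * k₂) = (P^2) ^ (-(((n:ℝ)+1)⁻¹)) := by
      rw [← h2, Real.rpow_def_of_pos (by positivity)]
      congr 1
      rw [Real.log_pow]
      push_cast
      field_simp
      ring
    -- AM-GM
    have amgm := Real.geom_mean_le_arith_mean_weighted Finset.univ
      (fun _ : Fin (n+1) => ((n:ℝ)+1)⁻¹) (fun i => (r i)^2)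
      (fun i _ => by positivity)
      (by simp [Finset.sum_const, Finset.card_univ]; field_simp)
      (fun i _ => by positivity)
    rw [Real.finset_prod_rpow _ _ (fun i _ => by positivity)] at amgm
    have hprodsq : ∏ i, (r i)^2 = P^2 := by
      rw [hP, Finset.prod_pow]
    rw [hprodsq, ← Finset.mul_sum] at amgm
    have hQpos : 0 < (P^2) ^ (((n:ℝ)+1)⁻¹) := Real.rpow_pos_of_pos (by positivity) _
    have key : ((n:ℝ)+1) * (P^2) ^ (((n:ℝ)+1)⁻¹) ≤ -k₁ / π := by
      rw [hS]
      have := mul_le_mul_of_nonneg_left amgm (le_of_lt hn1)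
      rwa [← mul_assoc, mul_inv_cancel₀ (ne_of_gt hn1), one_mul] at this
    rw [ge_iff_le, hexp, Real.rpow_neg (by positivity), ← div_eq_mul_inv,
      le_div_iff₀ hQpos]
    linarith [key]
  · intro hge
    obtain ⟨m, rfl⟩ : ∃ m, n = m + 1 := ⟨n - 1, (Nat.succ_pred_eq_of_pos hn).symm⟩
    set N : ℝ := (m:ℝ) + 1 + 1 with hN
    have hNpos : 0 < N := by positivity
    set S : ℝ := -k₁ / π with hSdef
    have hSpos : 0 < S := by
      apply div_pos (by linarith) hπ
    set a : ℝ := Real.exp (-(2 * π * k₂) / N) with ha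
    have hapos : 0 < a := Real.exp_pos _
    have ha2 : a ^ 2 = Real.exp (-(4 * π * k₂) / N) := by
      rw [ha, ← Real.exp_nat_mul]
      congr 1
      ring
    have hE : Real.exp ((4 * π / ((m:ℕ) + 1 + 1)) * k₂) * a ^ 2 = 1 := by
      rw [ha2, ← Real.exp_add]
      rw [← Real.exp_zero]
      congr 1
      push_cast
      rw [hN]
      field_simp
      simp only [Real.exp_zero]; ring
    -- From hge: S * E ≥ N with E * a² = 1, so S ≥ N * a²
    have hgeS : N * a ^ 2 ≤ S := by
      have hE' : Real.exp ((4 * π / ((m:ℕ) + 1 + 1)) * k₂) > 0 := Real.exp_pos _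
      have : N ≤ S * Real.exp ((4 * π / ((m:ℕ) + 1 + 1)) * k₂) := by
        rw [hN]; push_cast at hge ⊢; linarith [hge]
      calc N * a ^ 2 ≤ S * Real.exp ((4 * π / ((m:ℕ) + 1 + 1)) * k₂) * a ^ 2 := by
            nlinarith [sq_nonneg a]
        _ = S * (Real.exp ((4 * π / ((m:ℕ) + 1 + 1)) * k₂) * a ^ 2) := by ring
        _ = S := by rw [hE]; ring
    set M : ℝ := S / a ^ 2 - m with hM
    clear_value M
    have hM2 : 2 ≤ M := by
      rw [hM]
      rw [le_sub_iff_add_le, ← sub_nonneg]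
      have : S / a ^ 2 ≥ N := by
        rw [ge_iff_le, le_div_iff₀ (by positivity)]
        linarith [hgeS]
      rw [hN] at this
      linarith
    set d : ℝ := Real.sqrt (M ^ 2 - 4) with hd
    clear_value d
    have hdnn : 0 ≤ d := hd ▸ Real.sqrt_nonneg _
    have hd2 : d ^ 2 = M ^ 2 - 4 := by rw [hd]; exact Real.sq_sqrt (by nlinarith)
    set u : ℝ := (M + d) / 2 with hu
    clear_value u
    have hupos : 0 < u := by rw [hu]; linarith
    have huinv : u⁻¹ = (M - d) / 2 := by
      have : u * ((M - d) / 2) = 1 := by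
        rw [hu]; linear_combination (-1/4 : ℝ) * hd2
      field_simp [ne_of_gt hupos] at this ⊢
      linarith [this]
    have husum : u + u⁻¹ = M := by rw [huinv, hu]; ring
    set t : ℝ := Real.sqrt u with ht
    clear_value t
    have htpos : 0 < t := ht ▸ Real.sqrt_pos.mpr hupos
    have ht2 : t ^ 2 = u := by rw [ht]; exact Real.sq_sqrt (le_of_lt hupos)
    refine ⟨Fin.cons (a * t) (Fin.cons (a / t) (fun _ => a)), ?_, ?_, ?_⟩
    · intro i
      refine Fin.cases ?_ (fun j => ?_) i
      · exact mul_pos hapos htpos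
      · refine Fin.cases ?_ (fun j => ?_) j
        · exact div_pos hapos htpos
        · exact hapos
    · rw [Fin.sum_univ_succ]
      simp only [Fin.cons_succ, Fin.cons_zero]
      rw [Fin.sum_univ_succ]
      simp only [Fin.cons_succ, Fin.cons_zero]
      rw [Finset.sum_const, Finset.card_univ, Fintype.card_fin]
      have hsum : (a * t) ^ 2 + ((a / t) ^ 2 + (m : ℕ) • a ^ 2) = S := by
        have h1 : (a * t)^2 = a^2 * u := by rw [mul_pow, ht2]
        have h2 : (a / t)^2 = a^2 * u⁻¹ := by
          rw [div_pow, ht2]; field_simp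
        rw [h1, h2, nsmul_eq_mul]
        have : a ^ 2 * u + (a ^ 2 * u⁻¹ + (m:ℝ) * a ^ 2) = a ^ 2 * (u + u⁻¹ + m) := by ring
        rw [this, husum, hM]
        field_simp
        ring
      rw [hsum, hSdef]
      field_simp
    · rw [Fin.prod_univ_succ]
      simp only [Fin.cons_succ, Fin.cons_zero]
      rw [Fin.prod_univ_succ]
      simp only [Fin.cons_succ, Fin.cons_zero]
      rw [Finset.prod_const, Finset.card_univ, Fintype.card_fin]
      have hprod : a * t * (a / t * a ^ (m:ℕ)) = a ^ (m + 2) := by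
        field_simp
        ring
      rw [hprod]
      rw [Real.log_pow, ha, Real.log_exp]
      have hπne : π ≠ 0 := ne_of_gt hπ
      rw [hN]
      push_cast
      field_simp
      ring
end

section
/- If at a point r ∈ (ℝ^+)^{n+1} with μ_1(r) = k_1 and μ_2(r) = k_2 the differentials dμ_1 and dμ_2 are linearly dependent (i.e., dμ_1 ∧ dμ_2 = 0), then (-k_1/π)·e^{(4π/(n+1))k_2} = n+1. Consequently, if (-k_1/π)·e^{(4π/(n+1))k_2} > n+1 then (k_1,k_2) is a regular value of (μ_1,μ_2). -/
open Real BigOperators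

/-- If at a point r of the level set μ₁ = k₁, μ₂ = k₂ the differentials
dμ₁ = -2π Σ r_i dr_i and dμ₂ = -(1/(2π)) Σ (1/r_i) dr_i are linearly
dependent, then (-k₁/π)·e^{(4π/(n+1)) k₂} = n+1.  Consequently, if
(-k₁/π)·e^{(4π/(n+1)) k₂} > n+1 then (k₁,k₂) is a regular value of (μ₁,μ₂):
the differentials are linearly independent at every point of the level set. -/
theorem stmt7 (n : ℕ) (hn : 1 ≤ n) (k₁ k₂ : ℝ)
    (r : Fin (n + 1) → ℝ) (hr : ∀ i, 0 < r i)
    (h₁ : -π * ∑ i, (r i) ^ 2 = k₁)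
    (h₂ : -(1 / (2 * π)) * Real.log (∏ i, r i) = k₂) :
    ((∃ a b : ℝ, ¬(a = 0 ∧ b = 0) ∧
        ∀ i, a * (-(2 * π) * r i) + b * (-(1 / (2 * π)) * (1 / r i)) = 0) →
      (-k₁ / π) * Real.exp ((4 * π / (n + 1)) * k₂) = n + 1) ∧
    ((-k₁ / π) * Real.exp ((4 * π / (n + 1)) * k₂) > n + 1 →
      ∀ a b : ℝ,
        (∀ i, a * (-(2 * π) * r i) + b * (-(1 / (2 * π)) * (1 / r i)) = 0) →
        a = 0 ∧ b = 0) := by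
  have hπ : (π : ℝ) ≠ 0 := Real.pi_ne_zero
  have key : (∃ a b : ℝ, ¬(a = 0 ∧ b = 0) ∧
        ∀ i, a * (-(2 * π) * r i) + b * (-(1 / (2 * π)) * (1 / r i)) = 0) →
      (-k₁ / π) * Real.exp ((4 * π / (n + 1)) * k₂) = n + 1 := by
    rintro ⟨a, b, hab, heq⟩
    have ha : a ≠ 0 := by
      rintro rfl
      apply hab
      refine ⟨rfl, ?_⟩
      have h0 := heq 0
      have hr0 : r 0 ≠ 0 := (hr 0).ne'
      field_simp at h0
      linarith
    have hsq : ∀ i, 4 * π ^ 2 * a * (r i) ^ 2 = -b := by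
      intro i
      have h := heq i
      have hri : r i ≠ 0 := (hr i).ne'
      have h' : (a * (-(2 * π) * r i) + b * (-(1 / (2 * π)) * (1 / r i))) * (2 * π * r i) = 0 := by
        rw [h]; ring
      field_simp at h'
      nlinarith [h']
    have hre : ∀ i, r i = r 0 := by
      intro i
      have h1 := hsq i
      have h2 := hsq 0
      have hsqeq : (r i) ^ 2 = (r 0) ^ 2 := by
        have h4 : (4 : ℝ) * π ^ 2 * a ≠ 0 :=
          mul_ne_zero (mul_ne_zero (by norm_num) (pow_ne_zero 2 hπ)) ha
        exact mul_left_cancel₀ h4 (h1.trans h2.symm)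
      nlinarith [hr i, hr 0, hsqeq]
    set t := r 0 with htdef
    have ht : 0 < t := hr 0
    have hsum : ∑ i, (r i) ^ 2 = (n + 1) * t ^ 2 := by
      rw [Finset.sum_congr rfl (fun i _ => by rw [hre i])]
      simp [Finset.card_univ, mul_comm]
    have hprod : ∏ i, r i = t ^ (n + 1) := by
      rw [Finset.prod_congr rfl (fun i _ => by rw [hre i])]
      simp [Finset.card_univ]
    have h₁' : k₁ = -π * ((n + 1) * t ^ 2) := by rw [← h₁, hsum]
    have h₂' : k₂ = -(1 / (2 * π)) * ((n + 1) * Real.log t) := by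
      rw [← h₂, hprod, Real.log_pow]; push_cast; ring
    have hN : ((n : ℝ) + 1) ≠ 0 := by positivity
    have hexp : (4 * π / (n + 1)) * k₂ = -(2 * Real.log t) := by
      rw [h₂']; field_simp; ring
    have hexp2 : Real.exp (-(2 * Real.log t)) = (t ^ 2)⁻¹ := by
      rw [Real.exp_neg, show (2 : ℝ) * Real.log t = Real.log (t ^ 2) by
        rw [Real.log_pow]; push_cast; ring, Real.exp_log (by positivity)]
    rw [hexp, hexp2, h₁']
    have ht2 : t ^ 2 ≠ 0 := by positivity
    field_simp
  refine ⟨key, fun hgt a b heq => ?_⟩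
  by_contra hab
  have := key ⟨a, b, hab, heq⟩
  linarith
end
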